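/- The independence number is stable under 2-switch: for every simple graph G on a finite vertex set V and every graph G' obtained from G by a 2-switch, |α(G') − α(G)| ≤ 1. -/

import Mathlib

open SimpleGraph

/-- Four pairwise distinct vertices `a,b,c,d` with `ab, cd ∈ E(G)` and `ac, bd ∉ E(G)`:
the condition under which the 2-switch of `G` at `(a,b;c,d)` is performed. -/
def Switchable {V : Type*} (G : SimpleGraph V) (a b c d : V) : Prop :=
  a ≠ b ∧ a ≠ c ∧ a ≠ d ∧ b ≠ c ∧ b ≠ d ∧ c ≠ d ∧
    G.Adj a b ∧ G.Adj c d ∧ ¬ G.Adj a c ∧ ¬ G.Adj b d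

/-- The 2-switch of `G` at `(a,b;c,d)`: the graph on `V` with edge set
`(E(G) \ {ab, cd}) ∪ {ac, bd}`. -/
def twoSwitch {V : Type*} (G : SimpleGraph V) (a b c d : V) : SimpleGraph V :=
  SimpleGraph.fromEdgeSet ((G.edgeSet \ {s(a, b), s(c, d)}) ∪ {s(a, c), s(b, d)})

/-- `G'` is obtained from `G` by a 2-switch. -/
def ObtainedByTwoSwitch {V : Type*} (G G' : SimpleGraph V) : Prop :=
  ∃ a b c d : V, Switchable G a b c d ∧ G' = twoSwitch G a b c d

/-- The independence number `α(G)`: the maximum cardinality of a set of vertices no two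
of which are adjacent. -/
noncomputable def indepNum' {V : Type*} (G : SimpleGraph V) : ℕ :=
  sSup {n : ℕ | ∃ S : Set V, (∀ v ∈ S, ∀ w ∈ S, ¬ G.Adj v w) ∧ S.ncard = n}

private lemma key_transfer {V : Type*} [Fintype V] (P Q : SimpleGraph V) (p1 p2 q1 q2 : V)
    (himp : ∀ v w, P.Adj v w → Q.Adj v w ∨ s(v, w) = s(p1, p2) ∨ s(v, w) = s(q1, q2))
    (hpq : Q.Adj p1 q1)
    (S : Set V) (hS : ∀ v ∈ S, ∀ w ∈ S, ¬ Q.Adj v w) :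
    ∃ S' : Set V, (∀ v ∈ S', ∀ w ∈ S', ¬ P.Adj v w) ∧ S.ncard ≤ S'.ncard + 1 := by
  have hcard : ∀ x : V, S.ncard ≤ (S \ {x}).ncard + 1 := by
    intro x
    have hsub : S ⊆ (S \ {x}) ∪ {x} := by
      intro v hv
      by_cases hvx : v = x
      · exact Or.inr (by simp [hvx])
      · exact Or.inl ⟨hv, hvx⟩
    calc S.ncard ≤ ((S \ {x}) ∪ {x}).ncard := Set.ncard_le_ncard hsub (Set.toFinite _)
      _ ≤ (S \ {x}).ncard + ({x} : Set V).ncard := Set.ncard_union_le _ _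
      _ = (S \ {x}).ncard + 1 := by simp
  by_cases h1 : p1 ∈ S ∧ p2 ∈ S
  · refine ⟨S \ {p2}, ?_, hcard p2⟩
    rintro v ⟨hv, hv2⟩ w ⟨hw, hw2⟩ hadj
    rcases himp v w hadj with hq | hvw | hvw
    · exact hS v hv w hw hq
    · rcases Sym2.eq_iff.mp hvw with ⟨rfl, rfl⟩ | ⟨rfl, rfl⟩
      · exact hw2 rfl
      · exact hv2 rfl
    · rcases Sym2.eq_iff.mp hvw with ⟨rfl, rfl⟩ | ⟨rfl, rfl⟩
      · exact hS p1 h1.1 v hv hpq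
      · exact hS p1 h1.1 w hw hpq
  · by_cases h2 : q1 ∈ S ∧ q2 ∈ S
    · refine ⟨S \ {q2}, ?_, hcard q2⟩
      rintro v ⟨hv, hv2⟩ w ⟨hw, hw2⟩ hadj
      rcases himp v w hadj with hq | hvw | hvw
      · exact hS v hv w hw hq
      · rcases Sym2.eq_iff.mp hvw with ⟨rfl, rfl⟩ | ⟨rfl, rfl⟩
        · exact h1 ⟨hv, hw⟩
        · exact h1 ⟨hw, hv⟩
      · rcases Sym2.eq_iff.mp hvw with ⟨rfl, rfl⟩ | ⟨rfl, rfl⟩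
        · exact hw2 rfl
        · exact hv2 rfl
    · refine ⟨S, ?_, Nat.le_succ _⟩
      intro v hv w hw hadj
      rcases himp v w hadj with hq | hvw | hvw
      · exact hS v hv w hw hq
      · rcases Sym2.eq_iff.mp hvw with ⟨rfl, rfl⟩ | ⟨rfl, rfl⟩
        · exact h1 ⟨hv, hw⟩
        · exact h1 ⟨hw, hv⟩
      · rcases Sym2.eq_iff.mp hvw with ⟨rfl, rfl⟩ | ⟨rfl, rfl⟩
        · exact h2 ⟨hv, hw⟩
        · exact h2 ⟨hw, hv⟩

private lemma indepNum_le {V : Type*} [Fintype V] (P Q : SimpleGraph V)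
    (h : ∀ S : Set V, (∀ v ∈ S, ∀ w ∈ S, ¬ Q.Adj v w) →
      ∃ S' : Set V, (∀ v ∈ S', ∀ w ∈ S', ¬ P.Adj v w) ∧ S.ncard ≤ S'.ncard + 1) :
    indepNum' Q ≤ indepNum' P + 1 := by
  have hbdd : ∀ R : SimpleGraph V,
      BddAbove {n : ℕ | ∃ S : Set V, (∀ v ∈ S, ∀ w ∈ S, ¬ R.Adj v w) ∧ S.ncard = n} := by
    intro R
    refine ⟨Fintype.card V, ?_⟩
    rintro n ⟨S, _, rfl⟩
    calc S.ncard ≤ (Set.univ : Set V).ncard :=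
          Set.ncard_le_ncard (Set.subset_univ S) (Set.toFinite _)
      _ = Fintype.card V := by simp [Set.ncard_univ]
  have hne : {n : ℕ | ∃ S : Set V, (∀ v ∈ S, ∀ w ∈ S, ¬ Q.Adj v w) ∧ S.ncard = n}.Nonempty :=
    ⟨0, ∅, by simp, by simp⟩
  refine csSup_le hne ?_
  rintro n ⟨S, hSindep, rfl⟩
  obtain ⟨S', hS', hcard⟩ := h S hSindep
  have : S'.ncard ≤ indepNum' P := le_csSup (hbdd P) ⟨S', hS', rfl⟩
  omega

/-- the independence number is stable under 2-switch. -/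
theorem stmt_14 {V : Type*} [Fintype V] (G G' : SimpleGraph V)
    (h : ObtainedByTwoSwitch G G') :
    |(indepNum' G' : ℤ) - (indepNum' G : ℤ)| ≤ 1 := by
  obtain ⟨a, b, c, d, ⟨hab, hac, had, hbc, hbd, hcd, gab, gcd, gac, gbd⟩, rfl⟩ := h
  set H := twoSwitch G a b c d with hH
  have hHadj : ∀ v w, H.Adj v w ↔
      (s(v, w) ∈ (G.edgeSet \ {s(a, b), s(c, d)}) ∪ {s(a, c), s(b, d)}) ∧ v ≠ w := by
    intro v w
    rw [hH, twoSwitch, SimpleGraph.fromEdgeSet_adj]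
  -- direction 1: indepNum G ≤ indepNum H + 1
  have h1 : indepNum' G ≤ indepNum' H + 1 := by
    refine indepNum_le H G (key_transfer H G a c b d ?_ gab)
    intro v w hadj
    rw [hHadj] at hadj
    rcases hadj.1 with hmem | hmem
    · exact Or.inl (G.mem_edgeSet.mp hmem.1)
    · rcases hmem with hmem | hmem
      · exact Or.inr (Or.inl hmem)
      · exact Or.inr (Or.inr hmem)
  -- direction 2: indepNum H ≤ indepNum G + 1
  have h2 : indepNum' H ≤ indepNum' G + 1 := by
    have hHac : H.Adj a c := by
      rw [hHadj]
      exact ⟨Or.inr (Or.inl rfl), hac⟩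
    refine indepNum_le G H (key_transfer G H a b c d ?_ hHac)
    intro v w hadj
    by_cases he : s(v, w) = s(a, b) ∨ s(v, w) = s(c, d)
    · exact Or.inr he
    · push_neg at he
      refine Or.inl ?_
      rw [hHadj]
      exact ⟨Or.inl ⟨G.mem_edgeSet.mpr hadj, by simp [he.1, he.2]⟩, hadj.ne⟩
  rw [abs_le]
  constructor <;> [skip; skip] <;> omega
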